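/- Fix a real parameter c and natural numbers l and ν. The complementary polynomial 𝒫_ν(·,l) of the confluent hypergeometric equation satisfies, for every real x > 0, the ordinary differential equation x·(d²/dx²)𝒫_ν(x,l) + (l−ν+c−x)·(d/dx)𝒫_ν(x,l) + ν·𝒫_ν(x,l) = 0, where l−ν is taken as an integer. -/

import Mathlib

open Set Filter

private lemma idw_open {f : ℝ → ℝ} {s : Set ℝ} (hs : IsOpen s) {x : ℝ} (hx : x ∈ s) (n : ℕ) :
    iteratedDerivWithin n f s x = iteratedDeriv n f x := by
  rw [iteratedDerivWithin_eq_iteratedFDerivWithin, iteratedDeriv_eq_iteratedFDeriv,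
    iteratedFDerivWithin_of_isOpen n hs hx]

private lemma hasDerivAt_iterated {f : ℝ → ℝ} (hf : ContDiffOn ℝ (⊤ : ℕ∞) f (Ioi 0))
    (m : ℕ) {y : ℝ} (hy : 0 < y) :
    HasDerivAt (iteratedDeriv m f) (iteratedDeriv (m + 1) f y) y := by
  have hdo : DifferentiableOn ℝ (iteratedDerivWithin m f (Ioi 0)) (Ioi 0) :=
    hf.differentiableOn_iteratedDerivWithin (by exact_mod_cast ENat.coe_lt_top m)
      isOpen_Ioi.uniqueDiffOn
  have h1 : DifferentiableAt ℝ (iteratedDeriv m f) y := by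
    have h2 := (hdo y hy).differentiableAt (isOpen_Ioi.mem_nhds hy)
    have heq : iteratedDerivWithin m f (Ioi 0) =ᶠ[nhds y] iteratedDeriv m f := by
      filter_upwards [isOpen_Ioi.mem_nhds hy] with z hz using idw_open isOpen_Ioi hz m
    exact heq.differentiableAt_iff.mp h2
  have h3 := h1.hasDerivAt
  rwa [← iteratedDeriv_succ] at h3

private lemma leibniz_lin {u : ℝ → ℝ}
    (hu : ∀ m : ℕ, ∀ y : ℝ, 0 < y → HasDerivAt (iteratedDeriv m u) (iteratedDeriv (m + 1) u y) y)
    (p q : ℝ) :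
    ∀ n : ℕ, ∀ x : ℝ, 0 < x →
      iteratedDeriv (n + 1) (fun t => (p + q * t) * u t) x
        = (p + q * x) * iteratedDeriv (n + 1) u x + ((n : ℝ) + 1) * q * iteratedDeriv n u x := by
  intro n
  induction n with
  | zero =>
    intro x hx
    have h2 := hu 0 x hx
    rw [iteratedDeriv_zero] at h2
    have h1 : HasDerivAt (fun t : ℝ => p + q * t) q x := by
      simpa using ((hasDerivAt_id x).const_mul q).const_add p
    have h := h1.mul h2
    rw [iteratedDeriv_one, (HasDerivAt.deriv (f := fun t => (p + q * t) * u t) h), iteratedDeriv_zero]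
    ring
  | succ n ih =>
    intro x hx
    rw [iteratedDeriv_succ]
    have heq : deriv (iteratedDeriv (n + 1) (fun t => (p + q * t) * u t)) x
        = deriv (fun y => (p + q * y) * iteratedDeriv (n + 1) u y
            + ((n : ℝ) + 1) * q * iteratedDeriv n u y) x := by
      apply Filter.EventuallyEq.deriv_eq
      filter_upwards [isOpen_Ioi.mem_nhds hx] with z hz using ih z hz
    rw [heq]
    have h1 : HasDerivAt (fun t : ℝ => p + q * t) q x := by
      simpa using ((hasDerivAt_id x).const_mul q).const_add p
    have h := (h1.mul (hu (n + 1) x hx)).add ((hu n x hx).const_mul (((n : ℝ) + 1) * q))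
    rw [HasDerivAt.deriv (f := fun y => (p + q * y) * iteratedDeriv (n + 1) u y
            + ((n : ℝ) + 1) * q * iteratedDeriv n u y) h]
    push_cast
    ring

/-- Complementary polynomial of the confluent hypergeometric equation:
`𝒫_ν(x,l) = x^(1-c+ν-l) · e^x · (dᵛ/dtᵛ)(t^(c-1+l) e^(-t)) |_{t=x}` (rpow powers). -/
noncomputable def complConfluent (c : ℝ) (l ν : ℕ) (x : ℝ) : ℝ :=
  x ^ (1 - c + (ν : ℝ) - (l : ℝ)) * Real.exp x *
    iteratedDeriv ν (fun t : ℝ => t ^ (c - 1 + (l : ℝ)) * Real.exp (-t)) x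

theorem complConfluent_ode (c : ℝ) (l ν : ℕ) (x : ℝ) (hx : 0 < x) :
    x * iteratedDeriv 2 (fun t => complConfluent c l ν t) x
      + ((((l : ℤ) - (ν : ℤ) : ℤ) : ℝ) + c - x)
          * deriv (fun t => complConfluent c l ν t) x
      + (ν : ℝ) * complConfluent c l ν x = 0 := by
  have hxne : x ≠ 0 := hx.ne'
  set a : ℝ := c - 1 + (l : ℝ) with ha
  set b : ℝ := 1 - c + (ν : ℝ) - (l : ℝ) with hb
  set f : ℝ → ℝ := fun t : ℝ => t ^ a * Real.exp (-t) with hf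
  -- smoothness of f on (0,∞)
  have hfc : ContDiffOn ℝ (⊤ : ℕ∞) f (Ioi 0) := by
    intro y hy
    exact ((Real.contDiffAt_rpow_const_of_ne (ne_of_gt hy)).mul
      ((Real.contDiff_exp.comp contDiff_neg).contDiffAt)).contDiffWithinAt
  have hDf : ∀ m : ℕ, ∀ y : ℝ, 0 < y →
      HasDerivAt (iteratedDeriv m f) (iteratedDeriv (m + 1) f y) y :=
    fun m y hy => hasDerivAt_iterated hfc m hy
  have hDdf : ∀ m : ℕ, ∀ y : ℝ, 0 < y →
      HasDerivAt (iteratedDeriv m (deriv f)) (iteratedDeriv (m + 1) (deriv f) y) y := by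
    intro m y hy
    have h := hDf (m + 1) y hy
    rw [iteratedDeriv_succ', iteratedDeriv_succ'] at h
    exact h
  -- the first order ODE for f
  have hEqOn : EqOn (fun t => (0 + 1 * t) * deriv f t) (fun t => (a + (-1) * t) * f t) (Ioi 0) := by
    intro y hy
    have hy0 : (0 : ℝ) < y := hy
    have h1 : HasDerivAt (fun s : ℝ => s ^ a) (a * y ^ (a - 1)) y :=
      Real.hasDerivAt_rpow_const (Or.inl hy0.ne')
    have h2 : HasDerivAt (fun t : ℝ => Real.exp (-t)) (-Real.exp (-y)) y := by
      have h3 : HasDerivAt (fun t : ℝ => Real.exp (-t)) _ y :=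
        (Real.hasDerivAt_exp (-y)).comp y ((hasDerivAt_id y).neg)
      simpa using h3
    have hmul := h1.mul h2
    have hdf : deriv f y = a * y ^ (a - 1) * Real.exp (-y) + y ^ a * -Real.exp (-y) := hmul.deriv
    have hpow : y ^ a = y ^ (a - 1) * y := by
      rw [← Real.rpow_add_one hy0.ne']
      norm_num
    simp only [hf]
    rw [hdf]
    linear_combination (-(a * Real.exp (-y))) * hpow
  -- recurrence
  have hIDeq := (hEqOn.iteratedDeriv_of_isOpen isOpen_Ioi (ν + 1)) (mem_Ioi.mpr hx)
  have hL1 := leibniz_lin hDdf 0 1 ν x hx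
  have hL2 := leibniz_lin hDf a (-1) ν x hx
  rw [← iteratedDeriv_succ', ← iteratedDeriv_succ'] at hL1
  -- derivative of P
  have hP : ∀ y : ℝ, 0 < y → HasDerivAt (fun t => complConfluent c l ν t)
      (b * y ^ (b - 1) * Real.exp y * iteratedDeriv ν f y
        + y ^ b * Real.exp y * iteratedDeriv ν f y
        + y ^ b * Real.exp y * iteratedDeriv (ν + 1) f y) y := by
    intro y hy
    have h1 : HasDerivAt (fun s : ℝ => s ^ b) (b * y ^ (b - 1)) y :=
      Real.hasDerivAt_rpow_const (Or.inl hy.ne')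
    have h := (h1.mul (Real.hasDerivAt_exp y)).mul (hDf ν y hy)
    have hfun : (fun t => complConfluent c l ν t)
        = fun t => t ^ b * Real.exp t * iteratedDeriv ν f t := by
      funext t; simp only [complConfluent, hf, hb, ha]
    rw [hfun]
    have h' : HasDerivAt (fun t => t ^ b * Real.exp t * iteratedDeriv ν f t)
        ((b * y ^ (b - 1) * Real.exp y + y ^ b * Real.exp y) * iteratedDeriv ν f y
          + y ^ b * Real.exp y * iteratedDeriv (ν + 1) f y) y := h
    convert h' using 1
    ring
  have hd1 : deriv (fun t => complConfluent c l ν t) x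
      = b * x ^ (b - 1) * Real.exp x * iteratedDeriv ν f x
        + x ^ b * Real.exp x * iteratedDeriv ν f x
        + x ^ b * Real.exp x * iteratedDeriv (ν + 1) f x := (hP x hx).deriv
  -- second derivative of P
  have hd2 : iteratedDeriv 2 (fun t => complConfluent c l ν t) x
      = deriv (fun y => b * y ^ (b - 1) * Real.exp y * iteratedDeriv ν f y
          + y ^ b * Real.exp y * iteratedDeriv ν f y
          + y ^ b * Real.exp y * iteratedDeriv (ν + 1) f y) x := by
    have : iteratedDeriv 2 (fun t => complConfluent c l ν t)
        = deriv (deriv (fun t => complConfluent c l ν t)) := by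
      rw [iteratedDeriv_succ, iteratedDeriv_one]
    rw [this]
    apply Filter.EventuallyEq.deriv_eq
    filter_upwards [isOpen_Ioi.mem_nhds (mem_Ioi.mpr hx)] with z hz using (hP z hz).deriv
  have h1 : HasDerivAt (fun s : ℝ => s ^ b) (b * x ^ (b - 1)) x :=
    Real.hasDerivAt_rpow_const (Or.inl hxne)
  have h1' : HasDerivAt (fun s : ℝ => s ^ (b - 1)) ((b - 1) * x ^ (b - 1 - 1)) x :=
    Real.hasDerivAt_rpow_const (Or.inl hxne)
  have hexp : HasDerivAt Real.exp (Real.exp x) x := Real.hasDerivAt_exp x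
  have T1 := ((h1'.const_mul b).mul hexp).mul (hDf ν x hx)
  have T2 := (h1.mul hexp).mul (hDf ν x hx)
  have T3 := (h1.mul hexp).mul (hDf (ν + 1) x hx)
  have hφ := (T1.add T2).add T3
  have hd2' : iteratedDeriv 2 (fun t => complConfluent c l ν t) x
      = (b * ((b - 1) * x ^ (b - 1 - 1)) * Real.exp x + b * x ^ (b - 1) * Real.exp x)
          * iteratedDeriv ν f x
        + b * x ^ (b - 1) * Real.exp x * iteratedDeriv (ν + 1) f x
        + ((b * x ^ (b - 1) * Real.exp x + x ^ b * Real.exp x) * iteratedDeriv ν f x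
            + x ^ b * Real.exp x * iteratedDeriv (ν + 1) f x)
        + ((b * x ^ (b - 1) * Real.exp x + x ^ b * Real.exp x) * iteratedDeriv (ν + 1) f x
            + x ^ b * Real.exp x * iteratedDeriv (ν + 1 + 1) f x) := by
    rw [hd2]
    exact (hφ : HasDerivAt (fun y => b * y ^ (b - 1) * Real.exp y * iteratedDeriv ν f y
        + y ^ b * Real.exp y * iteratedDeriv ν f y
        + y ^ b * Real.exp y * iteratedDeriv (ν + 1) f y) _ x).deriv
  -- power identities
  have hpow1 : x ^ b = x ^ (b - 1) * x := by
    rw [← Real.rpow_add_one hxne]; norm_num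
  have hpow2 : x ^ (b - 1) = x ^ (b - 1 - 1) * x := by
    rw [← Real.rpow_add_one hxne]; norm_num
  have hPx : complConfluent c l ν x = x ^ b * Real.exp x * iteratedDeriv ν f x := by
    simp only [complConfluent, hf, hb, ha]
  rw [hd2', hd1, hPx, hpow1, hpow2]
  push_cast
  linear_combination (x ^ (b - 1 - 1) * x * x * Real.exp x) * (hIDeq - hL1 + hL2)
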